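/- For the 2-connected endomorphism f_m of the free group F_n (n ≥ 2) defined by f_m(γ₁) = (γ₁γ₂^{-1}γ₁^{-1}γ₂^{-1})^m γ₁ γ₂^{2m} and f_m(γᵢ) = γᵢ for i ≥ 2, the Fox derivative ∂f_m(γ₁)/∂γ₁, after applying the abelianization F_n → H₁ to all coefficients and then the involution γ ↦ γ^{-1}, equals 1 - γ₂ + γ₂² - ... + γ₂^{2m} in ℤ[H₁]. -/

import Mathlib

/-- The Laurent polynomial ring `ℤ[H₁] = ℤ[γ₁^{±1}, …, γ_n^{±1}]`. -/
abbrev LaurentRing (n : ℕ) : Type := AddMonoidAlgebra ℤ (Fin n →₀ ℤ)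

/-- The monomial `γ^x` attached to `x ∈ H₁ = ℤⁿ`. -/
noncomputable def monoR (n : ℕ) (x : Fin n →₀ ℤ) : LaurentRing n :=
  AddMonoidAlgebra.single x 1

/-- For `f_m(γ₁) = (γ₁γ₂⁻¹γ₁⁻¹γ₂⁻¹)^m γ₁ γ₂^{2m}` in the free group `F_n`
(`n ≥ 2`), the abelianized Fox derivative `∂f_m(γ₁)/∂γ₁ ∈ ℤ[H₁]`, after applying the
involution `γ ↦ γ⁻¹`, equals `1 - γ₂ + γ₂² - ⋯ + γ₂^{2m}`.
Here `d` is the Fox derivative with respect to `γ₁` pushed to `ℤ[H₁]`: it satisfies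
`d(γⱼ) = δ_{1j}` and the product rule `d(uv) = d(u) + ε(u)·d(v)` with `ε` the monomial map
induced by abelianization, and `σ` is the involution of `ℤ[H₁]`. -/
theorem fox_derivative_fm (n m : ℕ) (hn : 2 ≤ n)
    (ε : FreeGroup (Fin n) →* (LaurentRing n)ˣ)
    (hε : ∀ j : Fin n, (ε (FreeGroup.of j) : LaurentRing n) = monoR n (Finsupp.single j 1))
    (σ : LaurentRing n ≃+* LaurentRing n)
    (hσ : ∀ x : Fin n →₀ ℤ, σ (monoR n x) = monoR n (-x))
    (d : FreeGroup (Fin n) → LaurentRing n)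
    (hbase : ∀ j : Fin n, d (FreeGroup.of j) = if j = (⟨0, by omega⟩ : Fin n) then 1 else 0)
    (hprod : ∀ u v : FreeGroup (Fin n), d (u * v) = d u + (ε u : LaurentRing n) * d v) :
    σ (d ((FreeGroup.of (⟨0, by omega⟩ : Fin n) * (FreeGroup.of (⟨1, by omega⟩ : Fin n))⁻¹ *
          (FreeGroup.of (⟨0, by omega⟩ : Fin n))⁻¹ * (FreeGroup.of (⟨1, by omega⟩ : Fin n))⁻¹) ^ m *
          FreeGroup.of (⟨0, by omega⟩ : Fin n) *
          (FreeGroup.of (⟨1, by omega⟩ : Fin n)) ^ (2 * m)))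
      = ∑ k ∈ Finset.range (2 * m + 1),
          AddMonoidAlgebra.single (Finsupp.single (⟨1, by omega⟩ : Fin n) (k : ℤ))
            ((-1 : ℤ) ^ k) := by
  set i0 : Fin n := ⟨0, by omega⟩ with hi0
  set i1 : Fin n := ⟨1, by omega⟩ with hi1
  have h01 : i1 ≠ i0 := by simp [hi0, hi1, Fin.ext_iff]
  set a := FreeGroup.of i0 with ha
  set b := FreeGroup.of i1 with hb
  set s0 : Fin n →₀ ℤ := Finsupp.single i0 1 with hs0
  set s1 : Fin n →₀ ℤ := Finsupp.single i1 1 with hs1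
  -- monomial facts
  have hmul : ∀ x y : Fin n →₀ ℤ, monoR n x * monoR n y = monoR n (x + y) := by
    intro x y
    simp [monoR, AddMonoidAlgebra.single_mul_single]
  have hone : monoR n 0 = 1 := by
    rw [monoR, ← AddMonoidAlgebra.one_def]
  -- inverse coercion
  have hεinv : ∀ (u : FreeGroup (Fin n)) (x : Fin n →₀ ℤ),
      (ε u : LaurentRing n) = monoR n x →
        ((ε u⁻¹ : (LaurentRing n)ˣ) : LaurentRing n) = monoR n (-x) := by
    intro u x hu
    rw [map_inv]
    calc ((ε u)⁻¹ : (LaurentRing n)ˣ).val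
        = ((ε u)⁻¹ : (LaurentRing n)ˣ).val * ((ε u : LaurentRing n) * monoR n (-x)) := by
          rw [hu, hmul, add_neg_cancel, hone, mul_one]
      _ = (((ε u)⁻¹ * ε u : (LaurentRing n)ˣ) : LaurentRing n) * monoR n (-x) := by
          rw [Units.val_mul, mul_assoc]
      _ = monoR n (-x) := by rw [inv_mul_cancel, Units.val_one, one_mul]
  have hεa : (ε a : LaurentRing n) = monoR n s0 := hε i0
  have hεb : (ε b : LaurentRing n) = monoR n s1 := hε i1
  have hεainv : (ε a⁻¹ : LaurentRing n) = monoR n (-s0) := hεinv a s0 hεa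
  have hεbinv : (ε b⁻¹ : LaurentRing n) = monoR n (-s1) := hεinv b s1 hεb
  -- d facts
  have hd1 : d 1 = 0 := by
    have h := hprod 1 1
    simp only [mul_one, map_one, Units.val_one, one_mul] at h
    exact (left_eq_add.mp h)
  have hda : d a = 1 := by rw [ha, hbase]; simp
  have hdb : d b = 0 := by rw [hb, hbase]; simp [h01]
  have hdinv : ∀ u : FreeGroup (Fin n), d u⁻¹ = -((ε u⁻¹ : LaurentRing n) * d u) := by
    intro u
    have h := hprod u⁻¹ u
    rw [inv_mul_cancel, hd1] at h
    exact eq_neg_of_add_eq_zero_left h.symm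
  have hdainv : d a⁻¹ = -monoR n (-s0) := by rw [hdinv, hεainv, hda, mul_one]
  have hdbinv : d b⁻¹ = 0 := by rw [hdinv, hεbinv, hdb, mul_zero, neg_zero]
  have hdbk : ∀ k : ℕ, d (b ^ k) = 0 := by
    intro k
    induction k with
    | zero => simpa using hd1
    | succ k ih => rw [pow_succ, hprod, ih, hdb, mul_zero, add_zero]
  set c := a * b⁻¹ * a⁻¹ * b⁻¹ with hc
  have hεc : (ε c : LaurentRing n) = monoR n (Finsupp.single i1 (-2)) := by
    rw [hc, map_mul, map_mul, map_mul, Units.val_mul, Units.val_mul, Units.val_mul,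
      hεa, hεainv, hεbinv, hmul, hmul, hmul]
    congr 1
    have h2 : (Finsupp.single i1 (-2 : ℤ)) = Finsupp.single i1 (-1) + Finsupp.single i1 (-1) := by
      rw [← Finsupp.single_add]; norm_num
    rw [h2, hs1, ← Finsupp.single_neg]
    abel
  have hεck : ∀ k : ℕ, (ε (c ^ k) : LaurentRing n) = monoR n (Finsupp.single i1 (-2 * k)) := by
    intro k
    induction k with
    | zero => simp [hone]
    | succ k ih =>
      rw [pow_succ, map_mul, Units.val_mul, ih, hεc, hmul, ← Finsupp.single_add]
      congr 2
      push_cast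
      ring
  have hdc : d c = 1 - monoR n (-s1) := by
    have hεab : (ε (a * b⁻¹) : LaurentRing n) = monoR n (s0 + -s1) := by
      rw [map_mul, Units.val_mul, hεa, hεbinv, hmul]
    rw [hc, hprod, hprod, hprod, hda, hdbinv, hdainv, hεa, hεab]
    rw [mul_zero, add_zero, mul_zero, add_zero, mul_neg, hmul]
    have hx : s0 + -s1 + -s0 = -s1 := by abel
    rw [hx, sub_eq_add_neg]
  have key : ∀ k : ℕ, d (c ^ k) =
      ∑ j ∈ Finset.range (2 * k),
        AddMonoidAlgebra.single (Finsupp.single i1 (-(j : ℤ))) ((-1 : ℤ) ^ j) := by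
    intro k
    induction k with
    | zero => simpa using hd1
    | succ k ih =>
      rw [pow_succ, hprod, ih, hdc, hεck]
      have h2 : 2 * (k + 1) = (2 * k) + 1 + 1 := by ring
      rw [h2, Finset.sum_range_succ, Finset.sum_range_succ]
      have e1 : monoR n (Finsupp.single i1 (-2 * (k:ℤ))) * (1 - monoR n (-s1))
          = AddMonoidAlgebra.single (Finsupp.single i1 (-((2*k : ℕ) : ℤ))) ((-1:ℤ)^(2*k))
          + AddMonoidAlgebra.single (Finsupp.single i1 (-((2*k+1 : ℕ) : ℤ))) ((-1:ℤ)^(2*k+1)) := by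
        rw [mul_sub, mul_one, hmul]
        rw [(even_two_mul k).neg_one_pow, pow_succ, (even_two_mul k).neg_one_pow, one_mul]
        have hs : Finsupp.single i1 (-2 * (k:ℤ)) + -s1 = Finsupp.single i1 (-((2*k+1 : ℕ) : ℤ)) := by
          rw [hs1, ← Finsupp.single_neg, ← Finsupp.single_add]
          congr 1
          push_cast; ring
        rw [hs]
        have h1 : monoR n (Finsupp.single i1 (-2 * (k:ℤ)))
            = AddMonoidAlgebra.single (Finsupp.single i1 (-((2*k : ℕ):ℤ))) (1:ℤ) := by
          rw [monoR]; congr 2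
        have h2' : monoR n (Finsupp.single i1 (-((2*k+1 : ℕ) : ℤ)))
            = AddMonoidAlgebra.single (Finsupp.single i1 (-((2*k+1 : ℕ):ℤ))) (1:ℤ) := rfl
        rw [h1, h2', sub_eq_add_neg]
        congr 1
        exact (AddMonoidAlgebra.single_neg _ _).symm
      rw [e1]
      abel
  -- main d computation
  have hdw : d (c ^ m * a * b ^ (2 * m)) =
      ∑ j ∈ Finset.range (2 * m + 1),
        AddMonoidAlgebra.single (Finsupp.single i1 (-(j : ℤ))) ((-1 : ℤ) ^ j) := by
    rw [hprod, hprod, hda, hdbk, mul_zero, add_zero, mul_one, key, hεck,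
      Finset.sum_range_succ]
    congr 1
    rw [(even_two_mul m).neg_one_pow, monoR]
    congr 2
  rw [hdw, map_sum]
  refine Finset.sum_congr rfl fun j _ => ?_
  have hsingle : (AddMonoidAlgebra.single (Finsupp.single i1 (-(j : ℤ))) ((-1 : ℤ) ^ j) : LaurentRing n)
      = ((-1 : ℤ) ^ j) • monoR n (Finsupp.single i1 (-(j : ℤ))) := by
    rw [monoR, AddMonoidAlgebra.smul_single', mul_one]
  rw [hsingle, map_zsmul, hσ, ← Finsupp.single_neg, neg_neg, monoR,
    AddMonoidAlgebra.smul_single', mul_one]
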